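/- For all real u, v > 0 with u ≠ 1, v ≠ 1 and uv ≠ 1, the integral D_{1,1}(u,v) := ∫₀^∞ x/((x u^{-1}+1)(x+1)(xv+1)) dx equals ((v-1)·log(1/u) − (1/u − 1)·log v) / ((1/u − 1)(v−1)(v − 1/u)). -/

import Mathlib

open MeasureTheory Real

open Filter Topology

theorem D_one_one_closed_form (u v : ℝ) (hu : 0 < u) (hv : 0 < v)
    (hu1 : u ≠ 1) (hv1 : v ≠ 1) (huv : u * v ≠ 1) :
    ∫ x in Set.Ioi (0:ℝ), x / ((x * u⁻¹ + 1) * (x + 1) * (x * v + 1)) =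
      ((v - 1) * Real.log (1 / u) - (1 / u - 1) * Real.log v) /
        ((1 / u - 1) * (v - 1) * (v - 1 / u)) := by
  set a : ℝ := 1 / u with ha_def
  have hua : u⁻¹ = a := by rw [ha_def, one_div]
  rw [hua]
  have ha : 0 < a := by rw [ha_def]; positivity
  have ha1 : a ≠ 1 := by
    rw [ha_def]; intro h
    apply hu1
    field_simp at h
    linarith
  have hav : a ≠ v := by
    intro h
    apply huv
    rw [← h, ha_def]
    field_simp
  have ha1' : a - 1 ≠ 0 := sub_ne_zero.mpr ha1
  have h1a' : (1:ℝ) - a ≠ 0 := sub_ne_zero.mpr (Ne.symm ha1)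
  have hv1' : v - 1 ≠ 0 := sub_ne_zero.mpr hv1
  have h1v' : (1:ℝ) - v ≠ 0 := sub_ne_zero.mpr (Ne.symm hv1)
  have hav' : a - v ≠ 0 := sub_ne_zero.mpr hav
  have hva' : v - a ≠ 0 := sub_ne_zero.mpr (Ne.symm hav)
  set c1 : ℝ := -1 / ((a-1)*(a-v)) with hc1
  set c2 : ℝ := -1 / ((1-a)*(1-v)) with hc2
  set c3 : ℝ := -1 / ((v-a)*(v-1)) with hc3
  have hsum : c1 + c2 + c3 = 0 := by
    rw [hc1, hc2, hc3]
    field_simp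
    ring
  set F : ℝ → ℝ := fun x => c1 * Real.log (a*x+1) + c2 * Real.log (x+1)
      + c3 * Real.log (v*x+1) with hF_def
  -- derivative
  have hderiv : ∀ x ∈ Set.Ioi (0:ℝ),
      HasDerivAt F (x / ((x * a + 1) * (x + 1) * (x * v + 1))) x := by
    intro x hx
    have hx0 : (0:ℝ) < x := hx
    have h1 : (0:ℝ) < a*x+1 := by positivity
    have h2 : (0:ℝ) < x+1 := by positivity
    have h3 : (0:ℝ) < v*x+1 := by positivity
    have d1 : HasDerivAt (fun x : ℝ => Real.log (a*x+1)) (a/(a*x+1)) x := by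
      have h : HasDerivAt (fun x : ℝ => a*x+1) a x := by
        simpa using ((hasDerivAt_id x).const_mul a).add_const 1
      simpa using h.log h1.ne'
    have d2 : HasDerivAt (fun x : ℝ => Real.log (x+1)) (1/(x+1)) x := by
      have h : HasDerivAt (fun x : ℝ => x+1) 1 x := (hasDerivAt_id x).add_const 1
      simpa [one_div] using h.log h2.ne'
    have d3 : HasDerivAt (fun x : ℝ => Real.log (v*x+1)) (v/(v*x+1)) x := by
      have h : HasDerivAt (fun x : ℝ => v*x+1) v x := by
        simpa using ((hasDerivAt_id x).const_mul v).add_const 1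
      simpa using h.log h3.ne'
    have := ((d1.const_mul c1).add (d2.const_mul c2)).add (d3.const_mul c3)
    refine this.congr_deriv ?_
    rw [hc1, hc2, hc3]
    field_simp
    ring
  -- nonnegativity
  have hnonneg : ∀ x ∈ Set.Ioi (0:ℝ),
      0 ≤ x / ((x * a + 1) * (x + 1) * (x * v + 1)) := by
    intro x hx
    have hx0 : (0:ℝ) < x := hx
    positivity
  -- continuity at 0
  have hcont : ContinuousWithinAt F (Set.Ici (0:ℝ)) 0 := by
    have k : ∀ c : ℝ, ContinuousAt (fun x : ℝ => Real.log (c*x+1)) 0 := by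
      intro c
      apply ContinuousAt.log (by fun_prop)
      norm_num
    have k2 : ContinuousAt (fun x : ℝ => Real.log (x+1)) 0 := by
      apply ContinuousAt.log (by fun_prop)
      norm_num
    have hFA : ContinuousAt F 0 :=
      ContinuousAt.add (ContinuousAt.add (continuousAt_const.mul (k a))
        (continuousAt_const.mul k2)) (continuousAt_const.mul (k v))
    exact hFA.continuousWithinAt
  -- F rewritten for large x
  have keyF : ∀ x : ℝ, 0 < x →
      F x = c1 * Real.log (a + 1/x) + c2 * Real.log (1 + 1/x) + c3 * Real.log (v + 1/x) := by
    intro x hx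
    have hxne : x ≠ 0 := hx.ne'
    have e1 : a*x+1 = x*(a+1/x) := by field_simp
    have e2 : x+1 = x*(1+1/x) := by field_simp
    have e3 : v*x+1 = x*(v+1/x) := by field_simp
    have p1 : a + 1/x ≠ 0 := (add_pos ha (by positivity)).ne'
    have p2 : (1:ℝ) + 1/x ≠ 0 := by positivity
    have p3 : v + 1/x ≠ 0 := (add_pos hv (by positivity)).ne'
    rw [hF_def]
    simp only [e1, e2, e3, Real.log_mul hxne p1, Real.log_mul hxne p2, Real.log_mul hxne p3]
    linear_combination Real.log x * hsum
  -- limit at infinity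
  have t0 : Tendsto (fun x : ℝ => 1/x) atTop (𝓝 0) := by
    simpa [one_div] using tendsto_inv_atTop_zero
  have mk : ∀ c : ℝ, 0 < c →
      Tendsto (fun x : ℝ => Real.log (c + 1/x)) atTop (𝓝 (Real.log c)) := by
    intro c hc
    have h : Tendsto (fun x : ℝ => c + 1/x) atTop (𝓝 c) := by
      simpa using tendsto_const_nhds.add t0
    exact (Real.continuousAt_log hc.ne').tendsto.comp h
  have hF : Tendsto F atTop (𝓝 (c1 * Real.log a + c3 * Real.log v)) := by
    have h : Tendsto (fun x : ℝ => c1 * Real.log (a + 1/x) + c2 * Real.log (1 + 1/x)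
        + c3 * Real.log (v + 1/x)) atTop
        (𝓝 (c1 * Real.log a + c2 * Real.log 1 + c3 * Real.log v)) :=
      (((mk a ha).const_mul c1).add ((mk 1 one_pos).const_mul c2)).add ((mk v hv).const_mul c3)
    rw [Real.log_one] at h
    simp only [mul_zero, add_zero] at h
    apply h.congr'
    filter_upwards [eventually_gt_atTop (0:ℝ)] with x hx
    exact (keyF x hx).symm
  rw [MeasureTheory.integral_Ioi_of_hasDerivAt_of_nonneg hcont hderiv hnonneg hF]
  have hF0 : F 0 = 0 := by
    rw [hF_def]; norm_num
  rw [hF0, sub_zero, hc1, hc3]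
  field_simp
  ring
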